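/- For the cycle C_n, n ≥ 3, the maximax independence chromatic number equals the chromatic number: χ^{i-max}(C_n) = 2 if n is even and 3 if n is odd. -/

import Mathlib

/-- A set of vertices is independent if no two of its members are adjacent. -/
def IsIndep {V : Type*} (G : SimpleGraph V) (S : Set V) : Prop :=
  S.Pairwise fun u v => ¬ G.Adj u v

/-- The independence number of `G` restricted to the vertex set `R`. -/
noncomputable def indepNumOn {V : Type*} (G : SimpleGraph V) (R : Set V) : ℕ :=
  sSup {k : ℕ | ∃ S : Set V, S ⊆ R ∧ IsIndep G S ∧ S.ncard = k}

/-- `S` is a maximum independent set of `G` restricted to `R`. -/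
def IsMaxIndepOn {V : Type*} (G : SimpleGraph V) (R S : Set V) : Prop :=
  S ⊆ R ∧ IsIndep G S ∧ S.ncard = indepNumOn G R

/-- One step of the maximax independence procedure on remaining vertex set `R`:
remove a maximum independent set `S` chosen so that the remaining graph has
minimum independence number among all choices of maximum independent set. -/
def IsMaximaxStep {V : Type*} (G : SimpleGraph V) (R S : Set V) : Prop :=
  IsMaxIndepOn G R S ∧
    ∀ T : Set V, IsMaxIndepOn G R T → indepNumOn G (R \ S) ≤ indepNumOn G (R \ T)

/-- `IsMaximaxSeq G R L` : the list `L` of colour classes is obtained by iterating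
the maximax independence procedure starting from remaining vertex set `R`,
until no vertex remains. -/
def IsMaximaxSeq {V : Type*} (G : SimpleGraph V) : Set V → List (Set V) → Prop
  | R, [] => R = ∅
  | R, S :: L => S.Nonempty ∧ IsMaximaxStep G R S ∧ IsMaximaxSeq G (R \ S) L

/-- `χ^{i-max}(G) = ℓ` : the maximax independence, maximum proper colouring of `G`
uses exactly `ℓ` colours. -/
def ChiImaxEq {V : Type*} (G : SimpleGraph V) (ℓ : ℕ) : Prop :=
  (∃ L, IsMaximaxSeq G Set.univ L ∧ L.length = ℓ) ∧
    ∀ L, IsMaximaxSeq G Set.univ L → L.length = ℓ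

open Set

set_option linter.unusedSectionVars false

section Gen
variable {V : Type*} [Fintype V] {G : SimpleGraph V} {R S T : Set V}

lemma isIndep_mono (h : T ⊆ S) (hS : IsIndep G S) : IsIndep G T := hS.mono h

lemma isIndep_singleton (x : V) : IsIndep G {x} := Set.pairwise_singleton _ _

lemma isIndep_empty : IsIndep G (∅ : Set V) := Set.pairwise_empty _

lemma le_indepNumOn (hsub : S ⊆ R) (h : IsIndep G S) : S.ncard ≤ indepNumOn G R := by
  apply le_csSup
  · refine ⟨Fintype.card V, ?_⟩
    rintro k ⟨S, -, -, rfl⟩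
    calc S.ncard ≤ (Set.univ : Set V).ncard := Set.ncard_le_ncard (Set.subset_univ S) (Set.toFinite _)
      _ = Fintype.card V := by rw [Set.ncard_univ, Nat.card_eq_fintype_card]
  · exact ⟨S, hsub, h, rfl⟩

lemma indepNumOn_le {m : ℕ} (h : ∀ S : Set V, S ⊆ R → IsIndep G S → S.ncard ≤ m) :
    indepNumOn G R ≤ m := by
  refine csSup_le ⟨0, ∅, by simp, isIndep_empty, by simp⟩ ?_
  rintro k ⟨S, hs, hi, rfl⟩; exact h S hs hi

lemma indepNumOn_of_indep (h : IsIndep G R) : indepNumOn G R = R.ncard :=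
  le_antisymm (indepNumOn_le fun S hs _ => Set.ncard_le_ncard hs (Set.toFinite _))
    (le_indepNumOn subset_rfl h)

lemma maxIndepOn_of_indep (h : IsIndep G R) (hS : IsMaxIndepOn G R S) : S = R := by
  obtain ⟨hsub, -, hcard⟩ := hS
  exact Set.eq_of_subset_of_ncard_le hsub
    (by rw [hcard, indepNumOn_of_indep h]) (Set.toFinite _)

lemma seq_empty {L : List (Set V)} (h : IsMaximaxSeq G ∅ L) : L = [] := by
  cases L with
  | nil => rfl
  | cons S L =>
    obtain ⟨hne, ⟨⟨hsub, -, -⟩, -⟩, -⟩ := h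
    exact absurd (hne.mono hsub) (by simp)

lemma seq_indep_length (hR : IsIndep G R) (hne : R.Nonempty) :
    ∀ L, IsMaximaxSeq G R L → L.length = 1 := by
  rintro (_ | ⟨S, L⟩) h
  · exact absurd h.symm hne.ne_empty.symm
  · obtain ⟨-, ⟨hmax, -⟩, hrest⟩ := h
    obtain rfl := maxIndepOn_of_indep hR hmax
    rw [Set.diff_self] at hrest
    simp [seq_empty hrest]

lemma seq_indep_exists (hR : IsIndep G R) (hne : R.Nonempty) : IsMaximaxSeq G R [R] := by
  refine ⟨hne, ⟨⟨subset_rfl, hR, (indepNumOn_of_indep hR).symm⟩, ?_⟩, by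
    simp [IsMaximaxSeq, Set.diff_self]⟩
  intro T hT
  rw [Set.diff_self, indepNumOn_of_indep isIndep_empty]
  simp

end Gen

section OneEdge
variable {V : Type*} [Fintype V] {G : SimpleGraph V} {R : Set V} {w w' : V}

lemma oneEdge_subset (hadj : G.Adj w w') {T : Set V} (hT : T ⊆ R) (hTi : IsIndep G T) :
    T ⊆ R \ {w} ∨ T ⊆ R \ {w'} := by
  by_cases hw : w ∈ T
  · right
    intro x hx
    refine ⟨hT hx, ?_⟩
    rintro rfl
    exact hTi hw hx hadj.ne hadj
  · left
    intro x hx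
    refine ⟨hT hx, ?_⟩
    rintro rfl
    exact hw hx

lemma oneEdge_indepNumOn (hadj : G.Adj w w') (hw : w ∈ R) (hw' : w' ∈ R)
    (h1 : IsIndep G (R \ {w})) : indepNumOn G R = R.ncard - 1 := by
  refine le_antisymm (indepNumOn_le fun T hT hTi => ?_) ?_
  · rcases oneEdge_subset hadj hT hTi with h | h
    · calc T.ncard ≤ (R \ {w}).ncard := Set.ncard_le_ncard h (Set.toFinite _)
        _ = R.ncard - 1 := Set.ncard_diff_singleton_of_mem hw
    · calc T.ncard ≤ (R \ {w'}).ncard := Set.ncard_le_ncard h (Set.toFinite _)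
        _ = R.ncard - 1 := Set.ncard_diff_singleton_of_mem hw'
  · have := le_indepNumOn (G := G) (Set.diff_subset (s := R) (t := {w})) h1
    rwa [Set.ncard_diff_singleton_of_mem hw] at this

lemma oneEdge_maxIndep (hadj : G.Adj w w') (hw : w ∈ R) (hw' : w' ∈ R)
    (h1 : IsIndep G (R \ {w})) {T : Set V} (hT : IsMaxIndepOn G R T) :
    R \ T = {w} ∨ R \ T = {w'} := by
  obtain ⟨hsub, hTi, hcard⟩ := hT
  rw [oneEdge_indepNumOn hadj hw hw' h1] at hcard
  rcases oneEdge_subset hadj hsub hTi with h | h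
  · left
    have : T = R \ {w} := Set.eq_of_subset_of_ncard_le h
      (by rw [hcard, Set.ncard_diff_singleton_of_mem hw]) (Set.toFinite _)
    rw [this, Set.diff_diff_right_self, Set.inter_eq_self_of_subset_right (by simpa using hw)]
  · right
    have : T = R \ {w'} := Set.eq_of_subset_of_ncard_le h
      (by rw [hcard, Set.ncard_diff_singleton_of_mem hw']) (Set.toFinite _)
    rw [this, Set.diff_diff_right_self, Set.inter_eq_self_of_subset_right (by simpa using hw')]

lemma oneEdge_seq_length (hadj : G.Adj w w') (hw : w ∈ R) (hw' : w' ∈ R)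
    (h1 : IsIndep G (R \ {w})) :
    ∀ L, IsMaximaxSeq G R L → L.length = 2 := by
  rintro (_ | ⟨S, L⟩) h
  · exact absurd h (by intro h; rw [h] at hw; exact hw)
  · obtain ⟨-, ⟨hmax, -⟩, hrest⟩ := h
    rcases oneEdge_maxIndep hadj hw hw' h1 hmax with hd | hd <;>
      rw [hd] at hrest <;>
      simp [seq_indep_length (isIndep_singleton _) (Set.singleton_nonempty _) L hrest]

lemma oneEdge_seq_exists (hadj : G.Adj w w') (hw : w ∈ R) (hw' : w' ∈ R)
    (h1 : IsIndep G (R \ {w})) :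
    IsMaximaxSeq G R [R \ {w}, {w}] := by
  have hdd : R \ (R \ {w}) = {w} := by
    rw [Set.diff_diff_right_self, Set.inter_eq_self_of_subset_right (by simpa using hw)]
  refine ⟨⟨w', hw', by simpa using hadj.ne'⟩, ⟨⟨Set.diff_subset, h1, ?_⟩, ?_⟩, ?_⟩
  · rw [oneEdge_indepNumOn hadj hw hw' h1, Set.ncard_diff_singleton_of_mem hw]
  · intro T hT
    have h2 : ∀ x : V, indepNumOn G ({x} : Set V) = 1 := fun x => by
      rw [indepNumOn_of_indep (isIndep_singleton x), Set.ncard_singleton]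
    rcases oneEdge_maxIndep hadj hw hw' h1 hT with hd | hd <;> simp [hd, hdd, h2]
  · rw [hdd]
    exact seq_indep_exists (isIndep_singleton _) (Set.singleton_nonempty _)

end OneEdge

section Cycle
open SimpleGraph
variable {m : ℕ}

lemma cg_adj {u v : Fin (m+3)} :
    (cycleGraph (m+3)).Adj u v ↔ u = v + 1 ∨ v = u + 1 := by
  rw [cycleGraph_adj (n := m+1)]
  constructor
  · rintro (h | h)
    · left; rw [← h]; abel
    · right; rw [← h]; abel
  · rintro (rfl | rfl)
    · left; abel
    · right; abel

lemma cg_adj_succ (u : Fin (m+3)) : (cycleGraph (m+3)).Adj u (u+1) :=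
  cg_adj.mpr (Or.inr rfl)

lemma cycle_count {S : Set (Fin (m+3))} (hS : IsIndep (cycleGraph (m+3)) S) :
    2 * S.ncard + {u : Fin (m+3) | u ∉ S ∧ u + 1 ∉ S}.ncard = m + 3 := by
  set P := (fun u : Fin (m+3) => u - 1) '' S with hP
  have hPmem : ∀ u, u ∈ P ↔ u + 1 ∈ S := by
    intro u
    constructor
    · rintro ⟨s, hs, rfl⟩; simpa using hs
    · intro h; exact ⟨u + 1, h, by abel⟩
  have hPcard : P.ncard = S.ncard :=
    Set.ncard_image_of_injective _ sub_left_injective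
  have hdisj : Disjoint S P := by
    rw [Set.disjoint_left]
    intro u huS huP
    rw [hPmem] at huP
    exact hS huS huP ((cycleGraph (m+3)).ne_of_adj (cg_adj_succ u)) (cg_adj_succ u)
  have hcompl : (S ∪ P)ᶜ = {u : Fin (m+3) | u ∉ S ∧ u + 1 ∉ S} := by
    ext u; simp [hPmem u]
  have h1 : (S ∪ P).ncard = 2 * S.ncard := by
    rw [Set.ncard_union_eq hdisj (Set.toFinite _) (Set.toFinite _), hPcard]; ring
  have h2 := Set.ncard_add_ncard_compl (S ∪ P)
  rw [hcompl, h1, Nat.card_eq_fintype_card, Fintype.card_fin] at h2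
  exact h2

lemma exists_big_indep :
    ∃ S : Set (Fin (m+3)), IsIndep (cycleGraph (m+3)) S ∧ S.ncard = (m+3)/2 := by
  have hk : ∀ i : Fin ((m+3)/2), 2 * i.val < m + 3 := fun i => by have := i.2; omega
  set f : Fin ((m+3)/2) → Fin (m+3) := fun i => ⟨2 * i.val, hk i⟩ with hf
  have hinj : Function.Injective f := by
    intro i j h
    have := congrArg Fin.val h
    simp only [hf] at this
    exact Fin.ext (by omega)
  refine ⟨Set.range f, ?_, ?_⟩
  · rintro _ ⟨i, rfl⟩ _ ⟨j, rfl⟩ hne hadj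
    rw [cg_adj] at hadj
    have hj : 2 * j.val + 1 < m + 3 := by have := j.2; omega
    have hi : 2 * i.val + 1 < m + 3 := by have := i.2; omega
    rcases hadj with h | h
    · have := congrArg Fin.val h
      rw [Fin.val_add, Fin.val_one] at this
      simp only [hf] at this
      rw [Nat.mod_eq_of_lt hj] at this
      omega
    · have := congrArg Fin.val h
      rw [Fin.val_add, Fin.val_one] at this
      simp only [hf] at this
      rw [Nat.mod_eq_of_lt hi] at this
      omega
  · rw [← Set.image_univ, Set.ncard_image_of_injective _ hinj, Set.ncard_univ,
      Nat.card_eq_fintype_card, Fintype.card_fin]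

lemma cycle_indepNum_univ :
    indepNumOn (cycleGraph (m+3)) Set.univ = (m+3)/2 := by
  refine le_antisymm (indepNumOn_le fun S _ hS => ?_) ?_
  · have := cycle_count hS; omega
  · obtain ⟨S, hS, hc⟩ := exists_big_indep
    rw [← hc]
    exact le_indepNumOn (Set.subset_univ S) hS

lemma max_ncard {S : Set (Fin (m+3))} (hS : IsMaxIndepOn (cycleGraph (m+3)) Set.univ S) :
    S.ncard = (m+3)/2 := hS.2.2.trans cycle_indepNum_univ

lemma max_compl_even (he : Even (m+3)) {S : Set (Fin (m+3))}
    (hS : IsMaxIndepOn (cycleGraph (m+3)) Set.univ S) :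
    IsIndep (cycleGraph (m+3)) Sᶜ ∧ Sᶜ.ncard = (m+3)/2 := by
  have hcard := max_ncard hS
  have hcount := cycle_count hS.2.1
  obtain ⟨t, ht⟩ := he
  have hD : {u : Fin (m+3) | u ∉ S ∧ u + 1 ∉ S}.ncard = 0 := by omega
  have hDe : {u : Fin (m+3) | u ∉ S ∧ u + 1 ∉ S} = ∅ :=
    (Set.ncard_eq_zero (Set.toFinite _)).mp hD
  constructor
  · intro u hu v hv hne hadj
    rw [cg_adj] at hadj
    rcases hadj with h | h
    · have : v ∈ {u : Fin (m+3) | u ∉ S ∧ u + 1 ∉ S} := ⟨hv, by rw [← h]; exact hu⟩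
      rw [hDe] at this; exact this
    · have : u ∈ {u : Fin (m+3) | u ∉ S ∧ u + 1 ∉ S} := ⟨hu, by rw [← h]; exact hv⟩
      rw [hDe] at this; exact this
  · have h2 := Set.ncard_add_ncard_compl S
    rw [Nat.card_eq_fintype_card, Fintype.card_fin] at h2
    omega

lemma max_compl_odd (ho : ¬ Even (m+3)) {S : Set (Fin (m+3))}
    (hS : IsMaxIndepOn (cycleGraph (m+3)) Set.univ S) :
    ∃ w : Fin (m+3), w ∈ Sᶜ ∧ w + 1 ∈ Sᶜ ∧
      IsIndep (cycleGraph (m+3)) (Sᶜ \ {w}) ∧ IsIndep (cycleGraph (m+3)) (Sᶜ \ {w+1}) := by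
  have hcard := max_ncard hS
  have hcount := cycle_count hS.2.1
  have hmod : (m+3) % 2 = 1 := Nat.odd_iff.mp (Nat.not_even_iff_odd.mp ho)
  have hD : {u : Fin (m+3) | u ∉ S ∧ u + 1 ∉ S}.ncard = 1 := by omega
  obtain ⟨w, hw⟩ := Set.ncard_eq_one.mp hD
  have hwD : w ∈ {u : Fin (m+3) | u ∉ S ∧ u + 1 ∉ S} := by rw [hw]; rfl
  have hmemD : ∀ u : Fin (m+3), u ∉ S → u + 1 ∉ S → u = w := by
    intro u h1 h2
    have : u ∈ {u : Fin (m+3) | u ∉ S ∧ u + 1 ∉ S} := ⟨h1, h2⟩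
    rwa [hw, Set.mem_singleton_iff] at this
  refine ⟨w, hwD.1, hwD.2, ?_, ?_⟩
  · rintro u ⟨hu, hu2⟩ v ⟨hv, hv2⟩ hne hadj
    rw [cg_adj] at hadj
    rcases hadj with h | h
    · exact hv2 (hmemD v hv (by rw [← h]; exact hu))
    · exact hu2 (hmemD u hu (by rw [← h]; exact hv))
  · rintro u ⟨hu, hu2⟩ v ⟨hv, hv2⟩ hne hadj
    rw [cg_adj] at hadj
    rcases hadj with h | h
    · exact hu2 (by rw [h, hmemD v hv (by rw [← h]; exact hu)]; rfl)
    · exact hv2 (by rw [h, hmemD u hu (by rw [← h]; exact hv)]; rfl)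

lemma odd_compl_num (ho : ¬ Even (m+3)) {T : Set (Fin (m+3))}
    (hT : IsMaxIndepOn (cycleGraph (m+3)) Set.univ T) :
    indepNumOn (cycleGraph (m+3)) (Set.univ \ T) = (m+3)/2 := by
  obtain ⟨w, hw, hw1, hi1, hi2⟩ := max_compl_odd ho hT
  rw [show Set.univ \ T = Tᶜ from (Set.compl_eq_univ_diff T).symm]
  rw [oneEdge_indepNumOn (cg_adj_succ w) hw hw1 hi1]
  have h1 := Set.ncard_add_ncard_compl T
  rw [Nat.card_eq_fintype_card, Fintype.card_fin] at h1
  have hTc := max_ncard hT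
  have hmod : (m+3) % 2 = 1 := Nat.odd_iff.mp (Nat.not_even_iff_odd.mp ho)
  omega

end Cycle

open SimpleGraph in
theorem cycleGraph_chiImax (n : ℕ) (hn : 3 ≤ n) :
    (Even n → ChiImaxEq (SimpleGraph.cycleGraph n) 2) ∧
    (Odd n → ChiImaxEq (SimpleGraph.cycleGraph n) 3) := by
  obtain ⟨m, rfl⟩ : ∃ m, n = m + 3 := ⟨n - 3, by omega⟩
  constructor
  · intro he
    constructor
    · obtain ⟨S, hSi, hSc⟩ := exists_big_indep (m := m)
      have hSmax : IsMaxIndepOn (cycleGraph (m+3)) Set.univ S :=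
        ⟨Set.subset_univ S, hSi, by rw [cycle_indepNum_univ, hSc]⟩
      obtain ⟨hci, hcc⟩ := max_compl_even he hSmax
      have hud : Set.univ \ S = Sᶜ := (Set.compl_eq_univ_diff S).symm
      refine ⟨[S, Sᶜ], ⟨?_, ⟨hSmax, ?_⟩, ?_⟩, rfl⟩
      · exact Set.nonempty_of_ncard_ne_zero (by rw [hSc]; omega)
      · intro T hT
        obtain ⟨hTi, hTc⟩ := max_compl_even he hT
        rw [hud, show Set.univ \ T = Tᶜ from (Set.compl_eq_univ_diff T).symm,
          indepNumOn_of_indep hci, indepNumOn_of_indep hTi, hcc, hTc]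
      · rw [show IsMaximaxSeq (cycleGraph (m+3)) (Set.univ \ S) [Sᶜ] =
            IsMaximaxSeq (cycleGraph (m+3)) Sᶜ [Sᶜ] by rw [hud]]
        exact seq_indep_exists hci (Set.nonempty_of_ncard_ne_zero (by rw [hcc]; omega))
    · rintro (_ | ⟨S, L⟩) hL
      · have h0 : (Set.univ : Set (Fin (m+3))) = ∅ := hL
        exact absurd h0 Set.univ_nonempty.ne_empty
      · obtain ⟨-, ⟨hmax, -⟩, hrest⟩ := hL
        obtain ⟨hci, hcc⟩ := max_compl_even he hmax
        rw [show Set.univ \ S = Sᶜ from (Set.compl_eq_univ_diff S).symm] at hrest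
        have := seq_indep_length hci
          (Set.nonempty_of_ncard_ne_zero (by rw [hcc]; omega)) L hrest
        simp [this]
  · intro hodd
    have ho : ¬ Even (m+3) := Nat.not_even_iff_odd.mpr hodd
    constructor
    · obtain ⟨S, hSi, hSc⟩ := exists_big_indep (m := m)
      have hSmax : IsMaxIndepOn (cycleGraph (m+3)) Set.univ S :=
        ⟨Set.subset_univ S, hSi, by rw [cycle_indepNum_univ, hSc]⟩
      obtain ⟨w, hw, hw1, hi1, hi2⟩ := max_compl_odd ho hSmax
      have hud : Set.univ \ S = Sᶜ := (Set.compl_eq_univ_diff S).symm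
      refine ⟨[S, Sᶜ \ {w}, {w}], ⟨?_, ⟨hSmax, ?_⟩, ?_⟩, rfl⟩
      · exact Set.nonempty_of_ncard_ne_zero (by rw [hSc]; omega)
      · intro T hT
        rw [odd_compl_num ho hSmax, odd_compl_num ho hT]
      · rw [show IsMaximaxSeq (cycleGraph (m+3)) (Set.univ \ S) [Sᶜ \ {w}, {w}] =
            IsMaximaxSeq (cycleGraph (m+3)) Sᶜ [Sᶜ \ {w}, {w}] by rw [hud]]
        exact oneEdge_seq_exists (cg_adj_succ w) hw hw1 hi1
    · rintro (_ | ⟨S, L⟩) hL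
      · have h0 : (Set.univ : Set (Fin (m+3))) = ∅ := hL
        exact absurd h0 Set.univ_nonempty.ne_empty
      · obtain ⟨-, ⟨hmax, -⟩, hrest⟩ := hL
        obtain ⟨w, hw, hw1, hi1, hi2⟩ := max_compl_odd ho hmax
        rw [show Set.univ \ S = Sᶜ from (Set.compl_eq_univ_diff S).symm] at hrest
        have := oneEdge_seq_length (cg_adj_succ w) hw hw1 hi1 L hrest
        simp [this]
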